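/- Let Ψ = Ψ₁ + Ψ₂ with Ψ₁ ∈ C²((−1,1)) and Ψ₂ ∈ C²([−1,1]), and suppose there is k ∈ ℝ such that Ψ″(s) ≥ k for all s ∈ (−1,1). Let ε₀ ∈ (0,1]. Then there exist constants k₁ > 0 and k₂ ∈ ℝ, independent of ε, such that for every ε ∈ (0,ε₀] the regularized potential Ψ_ε := Ψ_{1,ε} + Ψ_{2,ε} satisfies Ψ_ε(s) ≥ k₁|s|³ − k₂ for all s ∈ ℝ. -/

import Mathlib

open Set

/-- The regularization `Ψ_{1,ε}` of a singular potential `Ψ₁ ∈ C²((-1,1))`. -/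
noncomputable def psi1eps (Ψ Ψ' Ψ'' : ℝ → ℝ) (ε s : ℝ) : ℝ :=
  if 1 - ε ≤ s then
    Ψ (1 - ε) + Ψ' (1 - ε) * (s - (1 - ε)) + (1 / 2) * Ψ'' (1 - ε) * (s - (1 - ε)) ^ 2
      + (1 / 6) * (s - (1 - ε)) ^ 3
  else if s ≤ -1 + ε then
    Ψ (-1 + ε) + Ψ' (-1 + ε) * (s - (ε - 1)) + (1 / 2) * Ψ'' (-1 + ε) * (s - (ε - 1)) ^ 2
      + (1 / 6) * |s - (ε - 1)| ^ 3
  else Ψ s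

/-- The regularization `Ψ_{2,ε}` of a regular potential `Ψ₂ ∈ C²([-1,1])`. -/
noncomputable def psi2eps (Ψ Ψ' Ψ'' : ℝ → ℝ) (ε s : ℝ) : ℝ :=
  if 1 - ε ≤ s then
    Ψ (1 - ε) + Ψ' (1 - ε) * (s - (1 - ε)) + (1 / 2) * Ψ'' (1 - ε) * (s - (1 - ε)) ^ 2
  else if s ≤ -1 + ε then
    Ψ (-1 + ε) + Ψ' (-1 + ε) * (s - (ε - 1)) + (1 / 2) * Ψ'' (-1 + ε) * (s - (ε - 1)) ^ 2
  else Ψ s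


private lemma core_ineq (A B y : ℝ) (hA : 0 ≤ A) (hB : 0 ≤ B) (hy : 0 ≤ y) :
    (1/48) * (y+1)^3 - (1/12 + A^2/2 + 22*(B+1/2)^3) ≤ y^3/6 - A*y - B*y^2 := by
  nlinarith [sq_nonneg (A - y), mul_nonneg (by linarith : (0:ℝ) ≤ y+1) (sq_nonneg (y-1)),
    mul_nonneg hy (sq_nonneg (y - 8*(B+1/2))),
    mul_nonneg (by linarith : (0:ℝ) ≤ B+1/2) (sq_nonneg (y - 8*(B+1/2))),
    pow_pos (by linarith : (0:ℝ) < B+1/2) 3]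

private lemma mvt_lower (f f' : ℝ → ℝ) (a b : ℝ) (hab : a ≤ b)
    (hmem : Icc a b ⊆ Ioo (-1:ℝ) 1)
    (hd : ∀ x ∈ Ioo (-1:ℝ) 1, HasDerivAt f (f' x) x)
    (m : ℝ) (hm : ∀ x ∈ Ioo a b, m ≤ f' x) :
    f a + m * (b - a) ≤ f b := by
  rcases eq_or_lt_of_le hab with h | h
  · subst h; simp
  · obtain ⟨c, hc, hceq⟩ := exists_hasDerivAt_eq_slope f f' h
      (fun x hx => ((hd x (hmem hx)).continuousAt).continuousWithinAt)
      (fun x hx => hd x (hmem ⟨hx.1.le, hx.2.le⟩))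
    have h1 := hm c hc
    rw [hceq] at h1
    have hb : 0 < b - a := by linarith
    have h2 := (le_div_iff₀ hb).mp h1
    linarith

private lemma mvt_upper (f f' : ℝ → ℝ) (a b : ℝ) (hab : a ≤ b)
    (hmem : Icc a b ⊆ Ioo (-1:ℝ) 1)
    (hd : ∀ x ∈ Ioo (-1:ℝ) 1, HasDerivAt f (f' x) x)
    (M : ℝ) (hm : ∀ x ∈ Ioo a b, f' x ≤ M) :
    f b ≤ f a + M * (b - a) := by
  rcases eq_or_lt_of_le hab with h | h
  · subst h; simp
  · obtain ⟨c, hc, hceq⟩ := exists_hasDerivAt_eq_slope f f' h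
      (fun x hx => ((hd x (hmem hx)).continuousAt).continuousWithinAt)
      (fun x hx => hd x (hmem ⟨hx.1.le, hx.2.le⟩))
    have h1 := hm c hc
    rw [hceq] at h1
    have hb : 0 < b - a := by linarith
    have h2 := (div_le_iff₀ hb).mp h1
    linarith

private lemma right_bounds (F F' : ℝ → ℝ)
    (hF : ∀ x ∈ Ioo (-1:ℝ) 1, HasDerivAt F (F' x) x)
    (k b : ℝ) (hb : b ∈ Ioo (-1:ℝ) 1) (hb0 : 0 ≤ b)
    (hg : ∀ x₁ x₂, x₁ ∈ Ioo (-1:ℝ) 1 → x₂ ∈ Ioo (-1:ℝ) 1 → x₁ ≤ x₂ →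
      F' x₁ + k * (x₂ - x₁) ≤ F' x₂)
    {a : ℝ} (hba : b ≤ a) (ha : a ∈ Ioo (-1:ℝ) 1) :
    F' b - |k| ≤ F' a ∧ F b - abs (F' b - |k|) ≤ F a := by
  have hd : ∀ x, b ≤ x → x ∈ Ioo (-1:ℝ) 1 → F' b - |k| ≤ F' x := by
    intro x hx hxm
    have h1 := hg b x hb hxm hx
    have ht : 0 ≤ x - b := by linarith
    have ht1 : x - b ≤ 1 := by have := hxm.2; linarith
    nlinarith [mul_nonneg (by linarith [neg_abs_le k] : (0:ℝ) ≤ k + |k|) ht,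
      mul_nonneg (abs_nonneg k) (by linarith : (0:ℝ) ≤ 1 - (x - b))]
  refine ⟨hd a hba ha, ?_⟩
  have h2 := mvt_lower F F' b a hba
    (fun x hx => ⟨lt_of_lt_of_le hb.1 hx.1, lt_of_le_of_lt hx.2 ha.2⟩) hF
    (F' b - |k|) (fun x hx => hd x hx.1.le ⟨hb.1.trans hx.1, hx.2.trans ha.2⟩)
  have ht : 0 ≤ a - b := by linarith
  have ht1 : a - b ≤ 1 := by have := ha.2; linarith
  nlinarith [mul_nonneg (by linarith [neg_abs_le (F' b - |k|)] :
      (0:ℝ) ≤ (F' b - |k|) + abs (F' b - |k|)) ht,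
    mul_nonneg (abs_nonneg (F' b - |k|)) (by linarith : (0:ℝ) ≤ 1 - (a - b))]

private lemma left_bounds (F F' : ℝ → ℝ)
    (hF : ∀ x ∈ Ioo (-1:ℝ) 1, HasDerivAt F (F' x) x)
    (k b : ℝ) (hb : b ∈ Ioo (-1:ℝ) 1) (hb0 : b ≤ 0)
    (hg : ∀ x₁ x₂, x₁ ∈ Ioo (-1:ℝ) 1 → x₂ ∈ Ioo (-1:ℝ) 1 → x₁ ≤ x₂ →
      F' x₁ + k * (x₂ - x₁) ≤ F' x₂)
    {a : ℝ} (hab : a ≤ b) (ha : a ∈ Ioo (-1:ℝ) 1) :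
    F' a ≤ F' b + |k| ∧ F b - abs (F' b + |k|) ≤ F a := by
  have hd : ∀ x, x ≤ b → x ∈ Ioo (-1:ℝ) 1 → F' x ≤ F' b + |k| := by
    intro x hx hxm
    have h1 := hg x b hxm hb hx
    have ht : 0 ≤ b - x := by linarith
    have ht1 : b - x ≤ 1 := by have := hxm.1; linarith
    nlinarith [mul_nonneg (by linarith [neg_abs_le k] : (0:ℝ) ≤ k + |k|) ht,
      mul_nonneg (abs_nonneg k) (by linarith : (0:ℝ) ≤ 1 - (b - x))]
  refine ⟨hd a hab ha, ?_⟩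
  have h2 := mvt_upper F F' a b hab
    (fun x hx => ⟨lt_of_lt_of_le ha.1 hx.1, lt_of_le_of_lt hx.2 hb.2⟩) hF
    (F' b + |k|) (fun x hx => hd x hx.2.le ⟨ha.1.trans hx.1, hx.2.trans hb.2⟩)
  have ht : 0 ≤ b - a := by linarith
  have ht1 : b - a ≤ 1 := by have := ha.1; linarith
  nlinarith [mul_nonneg (by linarith [le_abs_self (F' b + |k|)] :
      (0:ℝ) ≤ abs (F' b + |k|) - (F' b + |k|)) ht,
    mul_nonneg (abs_nonneg (F' b + |k|)) (by linarith : (0:ℝ) ≤ 1 - (b - a))]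

private lemma mid_bound (F F' : ℝ → ℝ)
    (hF : ∀ x ∈ Ioo (-1:ℝ) 1, HasDerivAt F (F' x) x)
    (k : ℝ)
    (hg : ∀ x₁ x₂, x₁ ∈ Ioo (-1:ℝ) 1 → x₂ ∈ Ioo (-1:ℝ) 1 → x₁ ≤ x₂ →
      F' x₁ + k * (x₂ - x₁) ≤ F' x₂)
    {s : ℝ} (hs : s ∈ Ioo (-1:ℝ) 1) :
    F 0 - |F' 0| - |k|/2 ≤ F s := by
  have h0 : (0:ℝ) ∈ Ioo (-1:ℝ) 1 := ⟨by norm_num, by norm_num⟩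
  have hh : ∀ x ∈ Ioo (-1:ℝ) 1,
      HasDerivAt (fun x => F x - F' 0 * x - (k/2) * x^2) (F' x - F' 0 - k * x) x := by
    intro x hx
    have h1 := hF x hx
    have h2 : HasDerivAt (fun x : ℝ => F' 0 * x) (F' 0) x := by
      simpa using (hasDerivAt_id x).const_mul (F' 0)
    have h3 : HasDerivAt (fun x : ℝ => (k/2) * x^2) (k * x) x := by
      have := (hasDerivAt_pow 2 x).const_mul (k/2)
      refine this.congr_deriv ?_
      ring
    exact (h1.sub h2).sub h3
  have hkey : F 0 ≤ F s - F' 0 * s - (k/2) * s^2 := by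
    rcases le_total 0 s with hs0 | hs0
    · have := mvt_lower (fun x => F x - F' 0 * x - (k/2) * x^2)
        (fun x => F' x - F' 0 - k * x) 0 s hs0
        (fun x hx => ⟨by have := hx.1; linarith, lt_of_le_of_lt hx.2 hs.2⟩) hh 0
        (fun x hx => by
          have := hg 0 x h0 ⟨by have := hx.1; linarith, hx.2.trans hs.2⟩ hx.1.le
          linarith)
      simpa using this
    · have := mvt_upper (fun x => F x - F' 0 * x - (k/2) * x^2)
        (fun x => F' x - F' 0 - k * x) s 0 hs0
        (fun x hx => ⟨lt_of_lt_of_le hs.1 hx.1, by have := hx.2; linarith⟩) hh 0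
        (fun x hx => by
          have := hg x 0 ⟨hs.1.trans hx.1, by have := hx.2; linarith⟩ h0 hx.2.le
          linarith)
      simpa using this
  have hs1 : -1 < s := hs.1
  have hs2 : s < 1 := hs.2
  have habs1 : |s| ≤ 1 := abs_le.mpr ⟨by linarith, by linarith⟩
  have e1 : -|F' 0| ≤ F' 0 * s := by
    have := neg_abs_le (F' 0 * s)
    have h2 : |F' 0 * s| ≤ |F' 0| := by
      rw [abs_mul]
      nlinarith [abs_nonneg (F' 0), abs_nonneg s]
    linarith
  have e2 : -(|k|/2) ≤ k/2 * s^2 := by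
    nlinarith [mul_nonneg (abs_nonneg k) (by nlinarith : (0:ℝ) ≤ 1 - s^2),
      mul_nonneg (by linarith [neg_abs_le k] : (0:ℝ) ≤ k + |k|) (sq_nonneg s)]
  linarith

/-- If `Ψ″ = Ψ₁″ + Ψ₂″ ≥ k` on `(-1,1)`, then there exist `k₁ > 0` and
`k₂ ∈ ℝ`, independent of `ε`, such that for every `ε ∈ (0,ε₀]` the regularized potential
`Ψ_ε = Ψ_{1,ε} + Ψ_{2,ε}` satisfies `Ψ_ε(s) ≥ k₁|s|³ - k₂` for all `s ∈ ℝ`. -/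
theorem stmt_8
    (Ψ₁ Ψ₁' Ψ₁'' Ψ₂ Ψ₂' Ψ₂'' : ℝ → ℝ)
    (hΨ₁d : ∀ s ∈ Ioo (-1 : ℝ) 1, HasDerivAt Ψ₁ (Ψ₁' s) s)
    (hΨ₁d2 : ∀ s ∈ Ioo (-1 : ℝ) 1, HasDerivAt Ψ₁' (Ψ₁'' s) s)
    (hΨ₁''cont : ContinuousOn Ψ₁'' (Ioo (-1 : ℝ) 1))
    (hΨ₂d : ∀ s ∈ Icc (-1 : ℝ) 1, HasDerivWithinAt Ψ₂ (Ψ₂' s) (Icc (-1 : ℝ) 1) s)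
    (hΨ₂d2 : ∀ s ∈ Icc (-1 : ℝ) 1, HasDerivWithinAt Ψ₂' (Ψ₂'' s) (Icc (-1 : ℝ) 1) s)
    (hΨ₂''cont : ContinuousOn Ψ₂'' (Icc (-1 : ℝ) 1))
    (k : ℝ) (hk : ∀ s ∈ Ioo (-1 : ℝ) 1, k ≤ Ψ₁'' s + Ψ₂'' s)
    (ε₀ : ℝ) (hε₀ : ε₀ ∈ Ioc (0 : ℝ) 1) :
    ∃ k₁ : ℝ, 0 < k₁ ∧ ∃ k₂ : ℝ,
      ∀ ε : ℝ, 0 < ε → ε ≤ ε₀ → ∀ s : ℝ,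
        k₁ * |s| ^ 3 - k₂ ≤ psi1eps Ψ₁ Ψ₁' Ψ₁'' ε s + psi2eps Ψ₂ Ψ₂' Ψ₂'' ε s := by
  obtain ⟨hε₀pos, hε₀le⟩ := hε₀
  -- combined derivatives
  have hFd : ∀ x ∈ Ioo (-1:ℝ) 1,
      HasDerivAt (fun t => Ψ₁ t + Ψ₂ t) (Ψ₁' x + Ψ₂' x) x := fun x hx =>
    (hΨ₁d x hx).add ((hΨ₂d x (Ioo_subset_Icc_self hx)).hasDerivAt
      (Icc_mem_nhds hx.1 hx.2))
  have hFd2 : ∀ x ∈ Ioo (-1:ℝ) 1,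
      HasDerivAt (fun t => Ψ₁' t + Ψ₂' t) (Ψ₁'' x + Ψ₂'' x) x := fun x hx =>
    (hΨ₁d2 x hx).add ((hΨ₂d2 x (Ioo_subset_Icc_self hx)).hasDerivAt
      (Icc_mem_nhds hx.1 hx.2))
  -- monotonicity of F' - k·id
  have gmono : ∀ x₁ x₂, x₁ ∈ Ioo (-1:ℝ) 1 → x₂ ∈ Ioo (-1:ℝ) 1 → x₁ ≤ x₂ →
      (Ψ₁' x₁ + Ψ₂' x₁) + k * (x₂ - x₁) ≤ Ψ₁' x₂ + Ψ₂' x₂ := by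
    intro x₁ x₂ h₁ h₂ hle
    exact mvt_lower (fun t => Ψ₁' t + Ψ₂' t) (fun t => Ψ₁'' t + Ψ₂'' t) x₁ x₂ hle
      (fun x hx => ⟨lt_of_lt_of_le h₁.1 hx.1, lt_of_le_of_lt hx.2 h₂.2⟩) hFd2
      k (fun x hx => hk x ⟨h₁.1.trans hx.1, hx.2.trans h₂.2⟩)
  have hbR : (1-ε₀) ∈ Ioo (-1:ℝ) 1 := ⟨by linarith, by linarith⟩
  have hbL : (ε₀-1) ∈ Ioo (-1:ℝ) 1 := ⟨by linarith, by linarith⟩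
  refine ⟨1/48, by norm_num,
    1/12 + (1 + abs (Ψ₁' (1-ε₀) + Ψ₂' (1-ε₀) - |k|)
        + abs (Ψ₁' (ε₀-1) + Ψ₂' (ε₀-1) + |k|))^2/2 + 22*(|k|/2 + 1/2)^3 + 1
      - min (Ψ₁ (1-ε₀) + Ψ₂ (1-ε₀) - abs (Ψ₁' (1-ε₀) + Ψ₂' (1-ε₀) - |k|))
          (min (Ψ₁ (ε₀-1) + Ψ₂ (ε₀-1) - abs (Ψ₁' (ε₀-1) + Ψ₂' (ε₀-1) + |k|))
            (Ψ₁ 0 + Ψ₂ 0 - |Ψ₁' 0 + Ψ₂' 0| - |k|/2)), ?_⟩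
  intro ε hε hεle s
  have hA0 : (0:ℝ) ≤ 1 + abs (Ψ₁' (1-ε₀) + Ψ₂' (1-ε₀) - |k|)
      + abs (Ψ₁' (ε₀-1) + Ψ₂' (ε₀-1) + |k|) := by
    have := abs_nonneg (Ψ₁' (1-ε₀) + Ψ₂' (1-ε₀) - |k|)
    have := abs_nonneg (Ψ₁' (ε₀-1) + Ψ₂' (ε₀-1) + |k|)
    linarith
  rw [psi1eps, psi2eps]
  by_cases h1 : 1 - ε ≤ s
  · -- right tail
    rw [if_pos h1, if_pos h1]
    have haR : (1-ε) ∈ Ioo (-1:ℝ) 1 := ⟨by linarith, by linarith⟩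
    obtain ⟨hd, hv⟩ := right_bounds (fun t => Ψ₁ t + Ψ₂ t) (fun t => Ψ₁' t + Ψ₂' t)
      hFd k (1-ε₀) hbR (by linarith) gmono (show (1:ℝ)-ε₀ ≤ 1-ε by linarith) haR
    have hd' : Ψ₁' (1-ε₀) + Ψ₂' (1-ε₀) - |k| ≤ Ψ₁' (1-ε) + Ψ₂' (1-ε) := hd
    have hv' : Ψ₁ (1-ε₀) + Ψ₂ (1-ε₀) - abs (Ψ₁' (1-ε₀) + Ψ₂' (1-ε₀) - |k|)
        ≤ Ψ₁ (1-ε) + Ψ₂ (1-ε) := hv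
    have hy0 : (0:ℝ) ≤ s - (1-ε) := by linarith
    have hs0 : (0:ℝ) ≤ s := by linarith
    have hcube : |s|^3 ≤ ((s - (1-ε)) + 1)^3 := by
      rw [abs_of_nonneg hs0]
      exact pow_le_pow_left₀ hs0 (by linarith) 3
    have hcore := core_ineq (1 + abs (Ψ₁' (1-ε₀) + Ψ₂' (1-ε₀) - |k|)
        + abs (Ψ₁' (ε₀-1) + Ψ₂' (ε₀-1) + |k|)) (|k|/2) (s - (1-ε)) hA0
        (by positivity) hy0
    have t1 := min_le_left (Ψ₁ (1-ε₀) + Ψ₂ (1-ε₀) - abs (Ψ₁' (1-ε₀) + Ψ₂' (1-ε₀) - |k|))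
        (min (Ψ₁ (ε₀-1) + Ψ₂ (ε₀-1) - abs (Ψ₁' (ε₀-1) + Ψ₂' (ε₀-1) + |k|))
          (Ψ₁ 0 + Ψ₂ 0 - |Ψ₁' 0 + Ψ₂' 0| - |k|/2))
    have t2 : -(1 + abs (Ψ₁' (1-ε₀) + Ψ₂' (1-ε₀) - |k|)
          + abs (Ψ₁' (ε₀-1) + Ψ₂' (ε₀-1) + |k|)) * (s - (1-ε))
        ≤ (Ψ₁' (1-ε) + Ψ₂' (1-ε)) * (s - (1-ε)) := by
      apply mul_le_mul_of_nonneg_right _ hy0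
      have := neg_abs_le (Ψ₁' (1-ε₀) + Ψ₂' (1-ε₀) - |k|)
      have := abs_nonneg (Ψ₁' (ε₀-1) + Ψ₂' (ε₀-1) + |k|)
      linarith
    have t3 : k * (s - (1-ε))^2 ≤ (Ψ₁'' (1-ε) + Ψ₂'' (1-ε)) * (s - (1-ε))^2 :=
      mul_le_mul_of_nonneg_right (hk _ haR) (sq_nonneg _)
    have t4 : -|k| * (s - (1-ε))^2 ≤ k * (s - (1-ε))^2 :=
      mul_le_mul_of_nonneg_right (neg_abs_le k) (sq_nonneg _)
    linarith [hcore, hcube, t1, t2, t3, t4, hv', hd']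
  · rw [if_neg h1]
    by_cases h2 : s ≤ -1 + ε
    · -- left tail
      rw [if_pos h2, if_neg h1, if_pos h2]
      have harg : (-1 : ℝ) + ε = ε - 1 := by ring
      rw [harg]
      have haL : (ε-1) ∈ Ioo (-1:ℝ) 1 := ⟨by linarith, by linarith⟩
      obtain ⟨hd, hv⟩ := left_bounds (fun t => Ψ₁ t + Ψ₂ t) (fun t => Ψ₁' t + Ψ₂' t)
        hFd k (ε₀-1) hbL (by linarith) gmono (show ε-1 ≤ ε₀-1 by linarith) haL
      have hd' : Ψ₁' (ε-1) + Ψ₂' (ε-1) ≤ Ψ₁' (ε₀-1) + Ψ₂' (ε₀-1) + |k| := hd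
      have hv' : Ψ₁ (ε₀-1) + Ψ₂ (ε₀-1) - abs (Ψ₁' (ε₀-1) + Ψ₂' (ε₀-1) + |k|)
          ≤ Ψ₁ (ε-1) + Ψ₂ (ε-1) := hv
      have hs2 : s ≤ ε - 1 := by linarith
      have hy0 : (0:ℝ) ≤ (ε-1) - s := by linarith
      have hs0 : s ≤ 0 := by linarith
      have habsz : |s - (ε-1)| = (ε-1) - s := by
        rw [abs_of_nonpos (by linarith)]; ring
      rw [habsz]
      have hcube : |s|^3 ≤ (((ε-1) - s) + 1)^3 := by
        rw [abs_of_nonpos hs0]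
        exact pow_le_pow_left₀ (by linarith) (by linarith) 3
      have hcore := core_ineq (1 + abs (Ψ₁' (1-ε₀) + Ψ₂' (1-ε₀) - |k|)
          + abs (Ψ₁' (ε₀-1) + Ψ₂' (ε₀-1) + |k|)) (|k|/2) ((ε-1) - s) hA0
          (by positivity) hy0
      have t1 := (min_le_right (Ψ₁ (1-ε₀) + Ψ₂ (1-ε₀) - abs (Ψ₁' (1-ε₀) + Ψ₂' (1-ε₀) - |k|))
          (min (Ψ₁ (ε₀-1) + Ψ₂ (ε₀-1) - abs (Ψ₁' (ε₀-1) + Ψ₂' (ε₀-1) + |k|))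
            (Ψ₁ 0 + Ψ₂ 0 - |Ψ₁' 0 + Ψ₂' 0| - |k|/2))).trans
        (min_le_left (Ψ₁ (ε₀-1) + Ψ₂ (ε₀-1) - abs (Ψ₁' (ε₀-1) + Ψ₂' (ε₀-1) + |k|))
          (Ψ₁ 0 + Ψ₂ 0 - |Ψ₁' 0 + Ψ₂' 0| - |k|/2))
      have t2 : (Ψ₁' (ε-1) + Ψ₂' (ε-1)) * ((ε-1) - s)
          ≤ (1 + abs (Ψ₁' (1-ε₀) + Ψ₂' (1-ε₀) - |k|)
            + abs (Ψ₁' (ε₀-1) + Ψ₂' (ε₀-1) + |k|)) * ((ε-1) - s) := by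
        apply mul_le_mul_of_nonneg_right _ hy0
        have := le_abs_self (Ψ₁' (ε₀-1) + Ψ₂' (ε₀-1) + |k|)
        have := abs_nonneg (Ψ₁' (1-ε₀) + Ψ₂' (1-ε₀) - |k|)
        linarith
      have t3 : k * (s - (ε-1))^2 ≤ (Ψ₁'' (ε-1) + Ψ₂'' (ε-1)) * (s - (ε-1))^2 :=
        mul_le_mul_of_nonneg_right (hk _ haL) (sq_nonneg _)
      have t4 : -|k| * (s - (ε-1))^2 ≤ k * (s - (ε-1))^2 :=
        mul_le_mul_of_nonneg_right (neg_abs_le k) (sq_nonneg _)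
      linarith [hcore, hcube, t1, t2, t3, t4, hv', hd']
    · -- middle
      rw [if_neg h2, if_neg h1, if_neg h2]
      have hsm : s ∈ Ioo (-1:ℝ) 1 :=
        ⟨by push_neg at h2; linarith, by push_neg at h1; linarith⟩
      have hmid : Ψ₁ 0 + Ψ₂ 0 - |Ψ₁' 0 + Ψ₂' 0| - |k|/2 ≤ Ψ₁ s + Ψ₂ s :=
        mid_bound (fun t => Ψ₁ t + Ψ₂ t) (fun t => Ψ₁' t + Ψ₂' t) hFd k gmono hsm
      have t1 := (min_le_right (Ψ₁ (1-ε₀) + Ψ₂ (1-ε₀) - abs (Ψ₁' (1-ε₀) + Ψ₂' (1-ε₀) - |k|))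
          (min (Ψ₁ (ε₀-1) + Ψ₂ (ε₀-1) - abs (Ψ₁' (ε₀-1) + Ψ₂' (ε₀-1) + |k|))
            (Ψ₁ 0 + Ψ₂ 0 - |Ψ₁' 0 + Ψ₂' 0| - |k|/2))).trans
        (min_le_right (Ψ₁ (ε₀-1) + Ψ₂ (ε₀-1) - abs (Ψ₁' (ε₀-1) + Ψ₂' (ε₀-1) + |k|))
          (Ψ₁ 0 + Ψ₂ 0 - |Ψ₁' 0 + Ψ₂' 0| - |k|/2))
      have habs1 : |s| ≤ 1 := abs_le.mpr ⟨by linarith [hsm.1], by linarith [hsm.2]⟩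
      have hcube : |s|^3 ≤ 1 := by
        calc |s|^3 ≤ 1^3 := pow_le_pow_left₀ (abs_nonneg s) habs1 3
        _ = 1 := one_pow 3
      have hpos1 : (0:ℝ) ≤ (1 + abs (Ψ₁' (1-ε₀) + Ψ₂' (1-ε₀) - |k|)
          + abs (Ψ₁' (ε₀-1) + Ψ₂' (ε₀-1) + |k|))^2/2 := by positivity
      have hpos2 : (0:ℝ) ≤ 22*(|k|/2 + 1/2)^3 := by positivity
      linarith
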